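/- Let F ∈ ℤ[x₁,…,xₙ]. There exists a nonzero m ∈ ℤⁿ such that F(x+m) = F(x) if and only if there exists a matrix A ∈ GL(n,ℤ) such that the polynomial F(xA), obtained from F by the linear change of coordinates sending the row vector x = (x₁,…,xₙ) to xA (i.e. substituting x_i ↦ Σ_j x_j·A_{ji}), lies in ℤ[x₂,…,xₙ], i.e. does not involve the variable x₁. -/

import Mathlib

open MvPolynomial

namespace TransInvAux

variable {n : ℕ}

/-- Translation by `m`. -/
noncomputable def Tr (m : Fin n → ℤ) :
    MvPolynomial (Fin n) ℤ →ₐ[ℤ] MvPolynomial (Fin n) ℤ :=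
  aeval fun i => X i + C (m i)

lemma Tr_Tr (a b : Fin n → ℤ) (F : MvPolynomial (Fin n) ℤ) :
    Tr a (Tr b F) = Tr (a + b) F := by
  have h : (fun i => (aeval fun i => X i + C (a i)) (X i + C (b i)))
      = fun i : Fin n => X i + C ((a + b) i) := by
    funext i
    simp [algebraMap_eq]
    ring
  rw [Tr, Tr, Tr, ← AlgHom.comp_apply, comp_aeval, h]

lemma Tr_zero (F : MvPolynomial (Fin n) ℤ) : Tr (0 : Fin n → ℤ) F = F := by
  simp [Tr, aeval_X_left_apply]

lemma Tr_iter {m : Fin n → ℤ} {F : MvPolynomial (Fin n) ℤ} (h : Tr m F = F) :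
    ∀ k : ℤ, Tr (k • m) F = F := by
  have hneg : Tr (-m) F = F := by
    conv_lhs => rw [← h]
    rw [Tr_Tr]
    simp [Tr_zero]
  intro k
  induction k using Int.induction_on with
  | zero => simpa using Tr_zero F
  | succ k ih =>
      have he : ((k : ℤ) + 1) • m = m + (k : ℤ) • m := by
        rw [add_smul, one_smul, add_comm]
      rw [he, ← Tr_Tr, ih, h]
  | pred k ih =>
      have he : (-(k : ℤ) - 1) • m = -m + (-(k : ℤ)) • m := by
        rw [sub_smul, one_smul]
        abel
      rw [he, ← Tr_Tr, ih, hneg]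

/-- Substituting `x_i ↦ x_i + t·v_i` with `t` a formal variable. -/
noncomputable def Ph (v : Fin n → ℤ) :
    MvPolynomial (Fin n) ℤ →ₐ[ℤ] Polynomial (MvPolynomial (Fin n) ℤ) :=
  aeval fun i => Polynomial.C (X i) + Polynomial.C (C (v i)) * Polynomial.X

lemma evalPh (v : Fin n → ℤ) (t : ℤ) (F : MvPolynomial (Fin n) ℤ) :
    Polynomial.aeval (C t : MvPolynomial (Fin n) ℤ) (Ph v F) = Tr (t • v) F := by
  have : Polynomial.aeval (C t : MvPolynomial (Fin n) ℤ) (Ph v F)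
      = (((Polynomial.aeval (C t : MvPolynomial (Fin n) ℤ)).restrictScalars
          ℤ).comp (Ph v)) F := rfl
  rw [this, Ph, comp_aeval, Tr]
  have h : (fun i => ((Polynomial.aeval (C t : MvPolynomial (Fin n) ℤ)).restrictScalars ℤ)
        (Polynomial.C (X i) + Polynomial.C (C (v i)) * Polynomial.X))
      = fun i : Fin n => X i + C ((t • v) i) := by
    funext i
    simp
    ring
  rw [h]

lemma Ph_const {v : Fin n → ℤ} {d : ℤ} (hd : d ≠ 0) {F : MvPolynomial (Fin n) ℤ}
    (h : ∀ k : ℤ, Tr ((k * d) • v) F = F) :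
    Ph v F = Polynomial.C F := by
  have hzero : Ph v F - Polynomial.C F = 0 := by
    apply Polynomial.eq_zero_of_infinite_isRoot
    apply Set.infinite_of_injective_forall_mem
      (f := fun k : ℤ => (C (k * d) : MvPolynomial (Fin n) ℤ))
    · intro k l hkl
      have := C_injective (Fin n) ℤ hkl
      exact mul_left_injective₀ hd this
    · intro k
      show Polynomial.IsRoot _ _
      rw [Polynomial.IsRoot, ← Polynomial.coe_aeval_eq_eval]
      simp only [map_sub, Polynomial.aeval_C]
      rw [evalPh, h k]
      simp
  exact sub_eq_zero.mp hzero

lemma Tr_of_unit_step {v : Fin n → ℤ} {d : ℤ} (hd : d ≠ 0) {F : MvPolynomial (Fin n) ℤ}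
    (h : Tr (d • v) F = F) : Tr v F = F := by
  have h1 : ∀ k : ℤ, Tr ((k * d) • v) F = F := by
    intro k
    have := Tr_iter h k
    rwa [smul_smul] at this
  have h2 := Ph_const hd h1
  have h3 := evalPh v 1 F
  rw [h2] at h3
  simpa using h3.symm

lemma not_mem_vars_of_Tr {i₀ : Fin n} {G : MvPolynomial (Fin n) ℤ}
    (h : Tr (Pi.single i₀ 1) G = G) : i₀ ∉ G.vars := by
  classical
  have h1 : ∀ k : ℤ, Tr ((k * 1) • Pi.single i₀ (1:ℤ)) G = G := by
    intro k
    have := Tr_iter h k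
    simpa using this
  have h2 : Ph (Pi.single i₀ 1) G = Polynomial.C G := Ph_const one_ne_zero h1
  -- substitute `t ↦ -X i₀`
  have h3 := congrArg (Polynomial.aeval ((-X i₀ : MvPolynomial (Fin n) ℤ))) h2
  have h4 : Polynomial.aeval ((-X i₀ : MvPolynomial (Fin n) ℤ))
      (Ph (Pi.single i₀ 1) G)
      = bind₁ (fun i : Fin n => if i = i₀ then 0 else X i) G := by
    have : Polynomial.aeval ((-X i₀ : MvPolynomial (Fin n) ℤ)) (Ph (Pi.single i₀ 1) G)
        = (((Polynomial.aeval ((-X i₀ : MvPolynomial (Fin n) ℤ))).restrictScalars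
            ℤ).comp (Ph (Pi.single i₀ 1))) G := rfl
    rw [this, Ph, comp_aeval]
    have hf : (fun i => ((Polynomial.aeval
          ((-X i₀ : MvPolynomial (Fin n) ℤ))).restrictScalars ℤ)
          ((Polynomial.C (X i) + Polynomial.C (C (Pi.single i₀ (1:ℤ) i)) * Polynomial.X :
            Polynomial (MvPolynomial (Fin n) ℤ))))
        = fun i : Fin n => if i = i₀ then 0 else X i := by
      funext i
      by_cases hi : i = i₀ <;> simp [hi, Pi.single_apply]
    rw [hf, aeval_eq_bind₁]
  rw [h4] at h3
  simp only [Polynomial.aeval_C] at h3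
  -- h3 : bind₁ ... G = G (algebraMap of G over itself)
  intro hmem
  have hmem' : i₀ ∈ (bind₁ (fun i : Fin n => if i = i₀ then 0 else X i) G).vars := by
    rw [h3]; exact hmem
  obtain ⟨i, _, hi2⟩ := mem_vars_bind₁ _ _ hmem'
  by_cases hii : i = i₀
  · rw [hii] at hi2; simp at hi2
  · rw [if_neg hii, vars_X] at hi2
    exact hii (Finset.mem_singleton.mp hi2).symm

lemma Tr_of_not_mem_vars {i₀ : Fin n} {G : MvPolynomial (Fin n) ℤ}
    (h : i₀ ∉ G.vars) : Tr (Pi.single i₀ 1) G = G := by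
  classical
  have hsupp : G ∈ supported ℤ ({i₀}ᶜ : Set (Fin n)) := by
    rw [mem_supported]
    intro i hi
    simp only [Set.mem_compl_iff, Set.mem_singleton_iff]
    intro hii
    exact h (hii ▸ hi)
  rw [supported_eq_adjoin_X] at hsupp
  have key : ∀ x : MvPolynomial (Fin n) ℤ,
      x ∈ Algebra.adjoin ℤ (X '' ({i₀}ᶜ : Set (Fin n))) →
      Tr (Pi.single i₀ 1) x = x := by
    intro x hx
    induction hx using Algebra.adjoin_induction with
    | mem x hx =>
        obtain ⟨i, hi, rfl⟩ := hx
        have hine : i ≠ i₀ := by simpa using hi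
        simp [Tr, Pi.single_apply, hine]
    | algebraMap r => simp [Tr]
    | add x y _ _ hx hy => rw [map_add, hx, hy]
    | mul x y _ _ hx hy => rw [map_mul, hx, hy]
  exact key G hsupp

/-- Linear substitution `x ↦ xA`. -/
noncomputable def Lm (A : Matrix (Fin n) (Fin n) ℤ) :
    MvPolynomial (Fin n) ℤ →ₐ[ℤ] MvPolynomial (Fin n) ℤ :=
  aeval fun i => ∑ j, C (A j i) * X j

lemma Lm_Lm (B A : Matrix (Fin n) (Fin n) ℤ) (F : MvPolynomial (Fin n) ℤ) :
    Lm B (Lm A F) = Lm (B * A) F := by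
  rw [Lm, Lm, Lm, ← AlgHom.comp_apply, comp_aeval]
  have h : (fun i => (aeval fun i => ∑ j, C (B j i) * X j) (∑ j, C (A j i) * X j))
      = fun i : Fin n => ∑ k, C ((B * A) k i) * X k := by
    funext i
    rw [map_sum]
    have e1 : ∀ x : Fin n, (aeval fun i => ∑ j, C (B j i) * X j) (C (A x i) * X x)
        = ∑ k, C (B k x * A x i) * X k := by
      intro x
      rw [map_mul, aeval_C, aeval_X, algebraMap_eq, Finset.mul_sum]
      exact Finset.sum_congr rfl fun k _ => by
        rw [← mul_assoc, ← C_mul, mul_comm (A x i)]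
    rw [Finset.sum_congr rfl fun x _ => e1 x, Finset.sum_comm]
    refine Finset.sum_congr rfl fun k _ => ?_
    rw [Matrix.mul_apply, map_sum, Finset.sum_mul]
  rw [h]

lemma Lm_one (F : MvPolynomial (Fin n) ℤ) : Lm (1 : Matrix (Fin n) (Fin n) ℤ) F = F := by
  have h : (fun i : Fin n => ∑ j, C ((1 : Matrix (Fin n) (Fin n) ℤ) j i) * X j)
      = fun i : Fin n => (X i : MvPolynomial (Fin n) ℤ) := by
    funext i
    rw [Finset.sum_eq_single i]
    · simp [Matrix.one_apply]
    · intro j _ hj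
      simp [Matrix.one_apply, hj]
    · simp
  rw [Lm, h, aeval_X_left_apply]

lemma Tr_Lm (w : Fin n → ℤ) (A : Matrix (Fin n) (Fin n) ℤ) (F : MvPolynomial (Fin n) ℤ) :
    Tr w (Lm A F) = Lm A (Tr (Matrix.vecMul w A) F) := by
  rw [Tr, Lm, ← AlgHom.comp_apply, comp_aeval, Tr, ← AlgHom.comp_apply, comp_aeval]
  have h : (fun i => (aeval fun i => X i + C (w i)) (∑ j, C (A j i) * X j))
      = fun i => (aeval fun i => ∑ j, C (A j i) * X j) (X i + C ((Matrix.vecMul w A) i)) := by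
    funext i
    rw [map_sum, map_add, aeval_X, aeval_C]
    have : ∀ j : Fin n, (aeval fun i => X i + C (w i)) (C (A j i) * X j)
        = C (A j i) * X j + C (A j i * w j) := by
      intro j
      rw [map_mul, aeval_X, aeval_C]
      simp [algebraMap_eq]
      ring
    rw [Finset.sum_congr rfl fun j _ => this j, Finset.sum_add_distrib]
    congr 1
    have hv : (Matrix.vecMul w A) i = ∑ j, w j * A j i := by
      simp [Matrix.vecMul, dotProduct]
    rw [hv, map_sum]
    exact Finset.sum_congr rfl fun j _ => by rw [mul_comm, algebraMap_eq]
  rw [h]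

lemma exists_basis_smul (m : Fin n → ℤ) (hm : m ≠ 0) (i₀ : Fin n) :
    ∃ (b : Module.Basis (Fin n) ℤ (Fin n → ℤ)) (d : ℤ), d ≠ 0 ∧ m = d • (b i₀ : Fin n → ℤ) := by
  classical
  set N : Submodule ℤ (Fin n → ℤ) := Submodule.span ℤ {m} with hN
  obtain ⟨k, snf⟩ := N.smithNormalForm (Pi.basisFun ℤ (Fin n))
  obtain ⟨bM, bN, f, a, hsnf⟩ := snf
  have hmN : m ∈ N := Submodule.mem_span_singleton_self m
  -- every basis vector of N is a multiple of m
  have hmul : ∀ i : Fin k, ∃ t : ℤ, t ≠ 0 ∧ (bN i : Fin n → ℤ) = t • m := by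
    intro i
    obtain ⟨t, ht⟩ := Submodule.mem_span_singleton.mp
      ((bN i).2 : (bN i : Fin n → ℤ) ∈ Submodule.span ℤ {m})
    refine ⟨t, ?_, ht.symm⟩
    rintro rfl
    apply Module.Basis.ne_zero bN i
    ext1
    simp [← ht]
  match k, bN, f, a, hsnf with
  | 0, bN, f, a, hsnf =>
      exfalso
      apply hm
      have h1 : (⟨m, hmN⟩ : N) = 0 := by
        apply bN.repr.injective
        exact Subsingleton.elim _ _
      exact congrArg Subtype.val h1
  | (k + 2), bN, f, a, hsnf =>
      exfalso
      obtain ⟨t0, ht0, h0⟩ := hmul 0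
      obtain ⟨t1, ht1, h1⟩ := hmul 1
      have hdep : t1 • (bN 0) - t0 • (bN 1) = (0 : N) := by
        ext1
        push_cast
        rw [h0, h1, smul_smul, smul_smul, mul_comm]
        simp
      have := congrArg (fun z => bN.repr z 0) hdep
      simp [Finsupp.single_apply] at this
      exact ht1 this
  | 1, bN, f, a, hsnf =>
      set c : ℤ := bN.repr ⟨m, hmN⟩ 0 with hc
      have hsum : (⟨m, hmN⟩ : N) = c • bN 0 := by
        have := bN.sum_repr ⟨m, hmN⟩
        rw [Fin.sum_univ_one] at this
        exact this.symm
      have h2 : m = c • ((bN 0 : N) : Fin n → ℤ) := by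
        have := congrArg Subtype.val hsum
        simpa using this
      rw [hsnf 0, smul_smul] at h2
      have hd : c * a 0 ≠ 0 := by
        intro h0
        apply hm
        rw [h2, h0, zero_smul]
      refine ⟨bM.reindex (Equiv.swap (f 0) i₀), c * a 0, hd, ?_⟩
      rw [Module.Basis.reindex_apply, Equiv.symm_swap, Equiv.swap_apply_right]
      exact h2

lemma isUnit_det_rows (b : Module.Basis (Fin n) ℤ (Fin n → ℤ)) :
    IsUnit (Matrix.of fun i j => b i j : Matrix (Fin n) (Fin n) ℤ).det := by
  classical
  set e := Pi.basisFun ℤ (Fin n)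
  have hP : e.toMatrix ⇑b = (Matrix.of fun i j => b i j : Matrix (Fin n) (Fin n) ℤ).transpose := by
    ext i j
    simp [Module.Basis.toMatrix_apply, e, Pi.basisFun_repr]
  have hu : IsUnit (e.toMatrix ⇑b).det := by
    apply IsUnit.of_mul_eq_one (b.toMatrix ⇑e).det
    rw [← Matrix.det_mul, Module.Basis.toMatrix_mul_toMatrix_flip, Matrix.det_one]
  rw [hP, Matrix.det_transpose] at hu
  exact hu

end TransInvAux

open TransInvAux

theorem translation_invariant_iff_variable_eliminable (n : ℕ) (hn : 0 < n)
    (F : MvPolynomial (Fin n) ℤ) :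
    (∃ m : Fin n → ℤ, m ≠ 0 ∧
        (aeval fun i => X i + MvPolynomial.C (m i)) F = F) ↔
      (∃ A : Matrix (Fin n) (Fin n) ℤ, IsUnit A.det ∧
        (⟨0, hn⟩ : Fin n) ∉
          ((aeval fun i => ∑ j : Fin n, MvPolynomial.C (A j i) * X j) F).vars) := by
  classical
  set i₀ : Fin n := ⟨0, hn⟩
  constructor
  · rintro ⟨m, hm, hF⟩
    have hTr : Tr m F = F := hF
    obtain ⟨b, d, hd, hmd⟩ := exists_basis_smul m hm i₀
    set A : Matrix (Fin n) (Fin n) ℤ := Matrix.of fun i j => b i j with hA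
    refine ⟨A, isUnit_det_rows b, ?_⟩
    have hv : Tr (fun j => b i₀ j) F = F := by
      apply Tr_of_unit_step hd
      rw [← hTr]
      congr 1
      rw [hmd]
    have hG : Tr (Pi.single i₀ 1) (Lm A F) = Lm A F := by
      rw [Tr_Lm]
      congr 1
      rw [Matrix.single_one_vecMul]
      exact hv
    exact not_mem_vars_of_Tr hG
  · rintro ⟨A, hA, hvars⟩
    have hvars' : i₀ ∉ (Lm A F).vars := hvars
    have hTrG : Tr (Pi.single i₀ 1) (Lm A F) = Lm A F := Tr_of_not_mem_vars hvars'
    rw [Tr_Lm, Matrix.single_one_vecMul] at hTrG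
    have hcancel : Tr (A i₀) F = F := by
      have := congrArg (Lm A⁻¹) hTrG
      rw [Lm_Lm, Lm_Lm, Matrix.nonsing_inv_mul A hA] at this
      rw [Lm_one, Lm_one] at this
      exact this
    refine ⟨A i₀, ?_, hcancel⟩
    intro h0
    have : A.det = 0 := Matrix.det_eq_zero_of_row_eq_zero i₀ fun j => congrFun h0 j
    rw [this] at hA
    simp at hA
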